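/- If F is the output of the bundles local search algorithm and O is any properly colored forest with bundles, then |O \ F| ≤ 3|F \ O|, and consequently |O| ≤ 3|F|; i.e., the algorithm is a 1/3-approximation for the Maximum-size Properly Colored Forest with Bundles problem. -/

import Mathlib

open scoped Classical

/-- `e` is incident to vertex `v`. -/
def Inc {V ε : Type*} (ends : ε → V × V) (e : ε) (v : V) : Prop :=
  (ends e).1 = v ∨ (ends e).2 = v

/-- `e` joins the vertices `u` and `v`. -/
def Joins {V ε : Type*} (ends : ε → V × V) (e : ε) (u v : V) : Prop :=
  ends e = (u, v) ∨ ends e = (v, u)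

/-- A cycle of length `n` in the edge set `F` of a multigraph. -/
def IsCycleIn {V ε : Type*} (ends : ε → V × V) (F : Finset ε) (n : ℕ) : Prop :=
  ∃ (vs : ZMod n → V) (es : ZMod n → ε), Function.Injective vs ∧ Function.Injective es ∧
    ∀ i : ZMod n, es i ∈ F ∧ Joins ends (es i) (vs i) (vs (i + 1))

/-- `F` is a forest with bundles: no cycle on at least three vertices. -/
def IsForestWithBundles {V ε : Type*} (ends : ε → V × V) (F : Finset ε) : Prop :=
  ¬ ∃ n : ℕ, 3 ≤ n ∧ IsCycleIn ends F n

/-- `F` is properly colored: two distinct edges of `F` sharing an endpoint have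
distinct colors. -/
def ProperlyColored {V ε C : Type*} (ends : ε → V × V) (c : ε → C) (F : Finset ε) : Prop :=
  ∀ e ∈ F, ∀ f ∈ F, e ≠ f → (∃ v, Inc ends e v ∧ Inc ends f v) → c e ≠ c f

/-- `F` is a properly colored forest with bundles. -/
def PCFB {V ε C : Type*} (ends : ε → V × V) (c : ε → C) (F : Finset ε) : Prop :=
  IsForestWithBundles ends F ∧ ProperlyColored ends c F

/-- There is a `u`–`v` path of length `n` in the support graph of `F`. -/
def SuppPath {V ε : Type*} (ends : ε → V × V) (F : Finset ε) (u v : V) (n : ℕ) : Prop :=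
  ∃ vs : Fin (n + 1) → V, Function.Injective vs ∧ vs 0 = u ∧ vs (Fin.last n) = v ∧
    ∀ i : Fin n, ∃ e ∈ F, Joins ends e (vs i.castSucc) (vs i.succ)

/-- `x` and `y` are connected by a walk using edges of `F`. -/
def ConnIn {V ε : Type*} (ends : ε → V × V) (F : Finset ε) (x y : V) : Prop :=
  ∃ n : ℕ, ∃ vs : Fin (n + 1) → V, vs 0 = x ∧ vs (Fin.last n) = y ∧
    ∀ i : Fin n, ∃ e ∈ F, Joins ends e (vs i.castSucc) (vs i.succ)

/-- The bundle of `F`-edges between `z` and `z'`. -/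
noncomputable def Bundle {V ε : Type*} (ends : ε → V × V) (F : Finset ε) (z z' : V) :
    Finset ε :=
  F.filter (fun e => Joins ends e z z')


section AuxiliaryLemmas

section Basic
variable {V ε : Type*} {ends : ε → V × V}

lemma Joins.symm {e : ε} {u v : V} (h : Joins ends e u v) : Joins ends e v u := Or.symm h

lemma joins_comm {e : ε} {u v : V} : Joins ends e u v ↔ Joins ends e v u := or_comm

lemma Joins.inc_left {e : ε} {u v : V} (h : Joins ends e u v) : Inc ends e u := by
  rcases h with h | h <;> [exact Or.inl (by rw [h]); exact Or.inr (by rw [h])]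

lemma Joins.inc_right {e : ε} {u v : V} (h : Joins ends e u v) : Inc ends e v := by
  rcases h with h | h <;> [exact Or.inr (by rw [h]); exact Or.inl (by rw [h])]

/-- two `Joins` facts about the same edge give same unordered pair -/
lemma joins_unique {e : ε} {a b u v : V} (h1 : Joins ends e a b) (h2 : Joins ends e u v) :
    (a = u ∧ b = v) ∨ (a = v ∧ b = u) := by
  rcases h1 with h1 | h1 <;> rcases h2 with h2 | h2 <;>
    rw [h1] at h2 <;> simp [Prod.ext_iff] at h2 <;> tauto

lemma Joins.congr_pair {e f : ε} {a b u v : V} (hf : Joins ends f a b)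
    (he : Joins ends e a b) (he' : Joins ends e u v) : Joins ends f u v := by
  rcases joins_unique he he' with ⟨h1, h2⟩ | ⟨h1, h2⟩ <;> subst h1 <;> subst h2
  · exact hf
  · exact hf.symm

lemma Joins.ne (hloopless : ∀ e : ε, (ends e).1 ≠ (ends e).2) {e : ε} {u v : V}
    (h : Joins ends e u v) : u ≠ v := by
  rcases h with h | h <;> intro huv <;> apply hloopless e <;> rw [h] <;> simp [huv]

/-- the one-step relation -/
def Step (ends : ε → V × V) (G : Finset ε) (x y : V) : Prop := ∃ e ∈ G, Joins ends e x y

lemma Step.symm {G : Finset ε} {x y : V} (h : Step ends G x y) : Step ends G y x := by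
  obtain ⟨e, he, hj⟩ := h; exact ⟨e, he, hj.symm⟩

lemma connIn_iff_rtg {G : Finset ε} {x y : V} :
    ConnIn ends G x y ↔ Relation.ReflTransGen (Step ends G) x y := by
  constructor
  · rintro ⟨n, vs, h0, hl, hstep⟩
    subst h0; subst hl
    induction n with
    | zero => exact .refl
    | succ m ih =>
      have head : Step ends G (vs 0) (vs ((0 : Fin (m+1)).succ)) := by
        obtain ⟨e, he, hj⟩ := hstep 0
        exact ⟨e, he, by convert hj using 2; exact rfl⟩
      have tail := ih (fun i : Fin (m+1) => vs i.succ) (fun i : Fin m => by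
        obtain ⟨e, he, hj⟩ := hstep i.succ
        refine ⟨e, he, ?_⟩
        convert hj using 2 <;> simp [Fin.ext_iff])
      refine Relation.ReflTransGen.head head ?_
      convert tail using 2 <;> simp [Fin.ext_iff]
  · intro h
    induction h with
    | refl => exact ⟨0, fun _ => x, rfl, rfl, fun i => absurd i.2 (by omega)⟩
    | @tail b c hab hbc ih =>
      obtain ⟨n, vs, h0, hl, hstep⟩ := ih
      refine ⟨n + 1, Fin.snoc vs c, ?_, ?_, ?_⟩
      · have h00 : (0 : Fin (n+2)) = (0 : Fin (n+1)).castSucc := rfl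
        rw [h00, Fin.snoc_castSucc, h0]
      · simp
      · intro i
        rcases eq_or_lt_of_le (Nat.lt_succ_iff.mp i.2) with hi | hi
        · obtain ⟨e, he, hj⟩ := hbc
          refine ⟨e, he, ?_⟩
          have h1 : (i.castSucc : Fin (n+2)) = (Fin.last n).castSucc := by
            simp [Fin.ext_iff, hi]
          have h2 : (i.succ : Fin (n+2)) = Fin.last (n+1) := by
            simp [Fin.ext_iff, hi]
          rw [h1, h2, Fin.snoc_castSucc, Fin.snoc_last, hl]
          exact hj
        · obtain ⟨e, he, hj⟩ := hstep ⟨i, hi⟩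
          refine ⟨e, he, ?_⟩
          have h1 : (i.castSucc : Fin (n+2)) = ((⟨i, hi⟩ : Fin n).castSucc.castSucc) := by
            simp [Fin.ext_iff]
          have h2 : (i.succ : Fin (n+2)) = ((⟨i, hi⟩ : Fin n).succ.castSucc) := by
            simp [Fin.ext_iff]
          rw [h1, h2, Fin.snoc_castSucc, Fin.snoc_castSucc]
          exact hj

lemma ConnIn.refl {G : Finset ε} (x : V) : ConnIn ends G x x :=
  connIn_iff_rtg.mpr .refl

lemma ConnIn.symm {G : Finset ε} {x y : V} (h : ConnIn ends G x y) : ConnIn ends G y x := by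
  rw [connIn_iff_rtg] at *
  haveI : Std.Symm (Step ends G) := ⟨fun _ _ h => h.symm⟩
  exact Std.Symm.symm _ _ h

lemma ConnIn.trans {G : Finset ε} {x y z : V} (h : ConnIn ends G x y)
    (h' : ConnIn ends G y z) : ConnIn ends G x z := by
  rw [connIn_iff_rtg] at *; exact h.trans h'

lemma ConnIn.mono {G G' : Finset ε} (hGG : G ⊆ G') {x y : V} (h : ConnIn ends G x y) :
    ConnIn ends G' x y := by
  rw [connIn_iff_rtg] at *
  exact Relation.ReflTransGen.mono (r := Step ends G) (p := Step ends G')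
    ((fun a b ⟨e, he, hj⟩ => ⟨e, hGG he, hj⟩ : ∀ a b, Step ends G a b → Step ends G' a b)) _ _ h

lemma ConnIn.of_step {G : Finset ε} {x y : V} {e : ε} (he : e ∈ G) (hj : Joins ends e x y) :
    ConnIn ends G x y := connIn_iff_rtg.mpr (.single ⟨e, he, hj⟩)

/-- mapping walks edgewise -/
lemma ConnIn.map {G G' : Finset ε} {x y : V}
    (hmap : ∀ a b, Step ends G a b → Step ends G' a b) (h : ConnIn ends G x y) :
    ConnIn ends G' x y := by
  rw [connIn_iff_rtg] at *
  exact Relation.ReflTransGen.mono (r := Step ends G) (p := Step ends G')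
    ((fun a b h => hmap a b h : ∀ a b, Step ends G a b → Step ends G' a b)) _ _ h

end Basic

section Cnt
variable {V ε : Type*} [DecidableEq ε] (ends : ε → V × V)

/-- number of `ConnIn G` classes meeting `Z` -/
noncomputable def cnt (G : Finset ε) (Z : Finset V) : ℕ :=
  (Z.image (fun v => {w | ConnIn ends G v w})).card

variable {ends}

lemma class_eq_iff {G : Finset ε} {v w : V} :
    {x | ConnIn ends G v x} = {x | ConnIn ends G w x} ↔ ConnIn ends G v w := by
  constructor
  · intro h
    have : w ∈ {x | ConnIn ends G w x} := ConnIn.refl w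
    rw [← h] at this; exact this
  · intro h; ext x; simp only [Set.mem_setOf_eq]
    exact ⟨fun hx => h.symm.trans hx, fun hx => h.trans hx⟩

lemma cnt_mono {G G' : Finset ε} (h : ∀ x y, ConnIn ends G x y → ConnIn ends G' x y)
    (Z : Finset V) : cnt ends G' Z ≤ cnt ends G Z := by
  apply Finset.card_le_card_of_surjOn (fun A => {w | ∃ v ∈ A, ConnIn ends G' v w})
  intro B hB
  simp only [Finset.coe_image, Set.mem_image, Finset.mem_coe] at hB ⊢
  obtain ⟨v, hv, rfl⟩ := hB
  refine ⟨{x | ConnIn ends G v x}, ⟨v, hv, rfl⟩, ?_⟩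
  ext w
  simp only [Set.mem_setOf_eq]
  constructor
  · rintro ⟨u, hu, huw⟩; exact ((h _ _ hu)).trans huw
  · intro hw; exact ⟨v, ConnIn.refl v, hw⟩

lemma cnt_congr {G G' : Finset ε} (h : ∀ x y, ConnIn ends G x y ↔ ConnIn ends G' x y)
    (Z : Finset V) : cnt ends G Z = cnt ends G' Z := by
  unfold cnt
  congr 1
  apply Finset.image_congr
  intro v _
  ext w; exact h v w

/-- the key merge lemma -/
lemma connIn_union_parallel {G S : Finset ε} {z z' : V} {e₀ : ε} (he₀ : e₀ ∈ S)
    (hS : ∀ e ∈ S, Joins ends e z z') {x y : V} :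
    ConnIn ends (G ∪ S) x y ↔ ConnIn ends G x y ∨
      (ConnIn ends G x z ∧ ConnIn ends G z' y) ∨
      (ConnIn ends G x z' ∧ ConnIn ends G z y) := by
  constructor
  · rw [connIn_iff_rtg]
    intro h
    induction h with
    | refl => exact Or.inl (ConnIn.refl x)
    | @tail b cc hab hbc ih =>
      obtain ⟨e, he, hj⟩ := hbc
      rcases Finset.mem_union.mp he with he | he
      · have step : ConnIn ends G b cc := ConnIn.of_step he hj
        rcases ih with h | ⟨h1, h2⟩ | ⟨h1, h2⟩
        · exact Or.inl (h.trans step)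
        · exact Or.inr (Or.inl ⟨h1, h2.trans step⟩)
        · exact Or.inr (Or.inr ⟨h1, h2.trans step⟩)
      · rcases joins_unique hj (hS e he) with ⟨hb, hc⟩ | ⟨hb, hc⟩
        · subst hb; subst hc
          rcases ih with h | ⟨h1, h2⟩ | ⟨h1, h2⟩
          · exact Or.inr (Or.inl ⟨h, ConnIn.refl _⟩)
          · exact Or.inl (h1.trans (h2.symm))
          · exact Or.inl h1
        · subst hb; subst hc
          rcases ih with h | ⟨h1, h2⟩ | ⟨h1, h2⟩
          · exact Or.inr (Or.inr ⟨h, ConnIn.refl _⟩)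
          · exact Or.inl h1
          · exact Or.inl (h1.trans h2.symm)
  · have hcross : ConnIn ends (G ∪ S) z z' :=
      ConnIn.of_step (Finset.mem_union_right _ he₀) (hS e₀ he₀)
    rintro (h | ⟨h1, h2⟩ | ⟨h1, h2⟩)
    · exact h.mono Finset.subset_union_left
    · exact ((h1.mono Finset.subset_union_left).trans hcross).trans
        (h2.mono Finset.subset_union_left)
    · exact ((h1.mono Finset.subset_union_left).trans hcross.symm).trans
        (h2.mono Finset.subset_union_left)

lemma connIn_union_parallel_of_conn {G S : Finset ε} {z z' : V} {e₀ : ε} (he₀ : e₀ ∈ S)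
    (hS : ∀ e ∈ S, Joins ends e z z') (hconn : ConnIn ends G z z') {x y : V} :
    ConnIn ends (G ∪ S) x y ↔ ConnIn ends G x y := by
  rw [connIn_union_parallel he₀ hS]
  constructor
  · rintro (h | ⟨h1, h2⟩ | ⟨h1, h2⟩)
    · exact h
    · exact (h1.trans hconn).trans h2
    · exact (h1.trans hconn.symm).trans h2
  · exact Or.inl

lemma cnt_le_cnt_union_parallel_add_one {G S : Finset ε} {z z' : V} {e₀ : ε} (he₀ : e₀ ∈ S)
    (hS : ∀ e ∈ S, Joins ends e z z') (Z : Finset V) :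
    cnt ends G Z ≤ cnt ends (G ∪ S) Z + 1 := by
  classical
  set f : V → Set V := fun v => {w | ConnIn ends G v w} with hf
  set f' : V → Set V := fun v => {w | ConnIn ends (G ∪ S) v w} with hf'
  set g : Set V → Set V := fun A => {w | ∃ v ∈ A, ConnIn ends (G ∪ S) v w} with hg
  have hgf : ∀ v, g (f v) = f' v := by
    intro v
    ext w
    simp only [hg, hf, hf', Set.mem_setOf_eq]
    constructor
    · rintro ⟨u, hu, huw⟩; exact (hu.mono Finset.subset_union_left).trans huw
    · intro h; exact ⟨v, ConnIn.refl v, h⟩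
  have hinj : Set.InjOn g ((Z.image f : Finset (Set V)) \ {f z} : Finset (Set V)) := by
    intro A hA B hB hAB
    simp only [Finset.coe_sdiff, Set.mem_diff, Finset.mem_coe, Finset.mem_image,
      Finset.mem_sdiff, Finset.mem_singleton] at hA hB
    obtain ⟨⟨v, hv, rfl⟩, hvz⟩ := hA
    obtain ⟨⟨w, hw, rfl⟩, hwz⟩ := hB
    rw [hgf, hgf] at hAB
    have hvw : ConnIn ends (G ∪ S) v w := by
      have : w ∈ f' w := ConnIn.refl w
      rw [← hAB] at this; exact this
    rcases (connIn_union_parallel he₀ hS).mp hvw with h | ⟨h1, _⟩ | ⟨h1, h2⟩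
    · exact class_eq_iff.mpr h
    · exact absurd (class_eq_iff.mpr h1) hvz
    · exact absurd (class_eq_iff.mpr h2.symm) hwz
  calc cnt ends G Z = (Z.image f).card := rfl
    _ ≤ ((Z.image f) \ {f z}).card + 1 := by
        have := Finset.card_sdiff_add_card_eq_card (s := {f z} ∩ Z.image f)
          (t := Z.image f) Finset.inter_subset_right
        have h2 : (Z.image f) \ ({f z} ∩ Z.image f) = (Z.image f) \ {f z} := by
          ext A; simp only [Finset.mem_sdiff, Finset.mem_inter, Finset.mem_singleton]
          tauto
        have h3 : ({f z} ∩ Z.image f).card ≤ 1 :=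
          le_trans (Finset.card_le_card Finset.inter_subset_left) (by simp)
        rw [h2] at this
        omega
    _ ≤ cnt ends (G ∪ S) Z + 1 := by
        apply Nat.add_le_add_right
        apply Finset.card_le_card_of_injOn g ?_ hinj
        intro A hA
        simp only [Finset.mem_coe, Finset.mem_sdiff, Finset.mem_singleton, Finset.mem_image] at hA
        obtain ⟨⟨v, hv, rfl⟩, _⟩ := hA
        rw [hgf]
        exact Finset.mem_image_of_mem _ hv

lemma cnt_insert_add_one_le {G : Finset ε} {e : ε} {u v : V} (hj : Joins ends e u v)
    (hnc : ¬ ConnIn ends G u v) {Z : Finset V} (hu : u ∈ Z) (hv : v ∈ Z) :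
    cnt ends (G ∪ {e}) Z + 1 ≤ cnt ends G Z := by
  classical
  set f : V → Set V := fun w => {x | ConnIn ends G w x} with hf
  set f' : V → Set V := fun w => {x | ConnIn ends (G ∪ {e}) w x} with hf'
  set g : Set V → Set V := fun A => {w | ∃ x ∈ A, ConnIn ends (G ∪ {e}) x w} with hg
  have hgf : ∀ w, g (f w) = f' w := by
    intro w
    ext x
    simp only [hg, hf, hf', Set.mem_setOf_eq]
    constructor
    · rintro ⟨a, ha, hax⟩; exact (ha.mono Finset.subset_union_left).trans hax
    · intro h; exact ⟨w, ConnIn.refl w, h⟩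
  have hfvu : f v ≠ f u := fun h => hnc ((class_eq_iff.mp h).symm)
  have himg : Z.image f' ⊆ ((Z.image f).erase (f u)).image g := by
    intro B hB
    obtain ⟨w, hw, rfl⟩ := Finset.mem_image.mp hB
    by_cases hwu : f w = f u
    · have hwv : f' w = f' v := by
        apply class_eq_iff.mpr
        have h1 : ConnIn ends G w u := class_eq_iff.mp hwu
        exact (h1.mono Finset.subset_union_left).trans
          (ConnIn.of_step (Finset.mem_union_right _ (Finset.mem_singleton_self e)) hj)
      rw [hwv, ← hgf]
      exact Finset.mem_image_of_mem _
        (Finset.mem_erase.mpr ⟨hfvu, Finset.mem_image_of_mem _ hv⟩)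
    · rw [← hgf]
      exact Finset.mem_image_of_mem _
        (Finset.mem_erase.mpr ⟨hwu, Finset.mem_image_of_mem _ hw⟩)
  have h1 : (Z.image f').card ≤ (Z.image f).card - 1 := by
    calc (Z.image f').card ≤ (((Z.image f).erase (f u)).image g).card :=
          Finset.card_le_card himg
      _ ≤ ((Z.image f).erase (f u)).card := Finset.card_image_le
      _ = (Z.image f).card - 1 :=
          Finset.card_erase_of_mem (Finset.mem_image_of_mem _ hu)
  have h2 : 1 ≤ (Z.image f).card := by
    rw [Nat.one_le_iff_ne_zero, ← Nat.pos_iff_ne_zero, Finset.card_pos]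
    exact ⟨f u, Finset.mem_image_of_mem _ hu⟩
  show (Z.image f').card + 1 ≤ (Z.image f).card
  omega

end Cnt

section Paths
variable {V ε : Type*} {ends : ε → V × V}

lemma exists_suppPath {G : Finset ε} {a b : V} (h : ConnIn ends G a b) :
    ∃ n, SuppPath ends G a b n := by
  classical
  have hex : ∃ m : ℕ, ∃ vs : Fin (m + 1) → V, vs 0 = a ∧ vs (Fin.last m) = b ∧
      ∀ i : Fin m, ∃ e ∈ G, Joins ends e (vs i.castSucc) (vs i.succ) := h
  set m := Nat.find hex with hm
  obtain ⟨vs, h0, hl, hstep⟩ := Nat.find_spec hex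
  refine ⟨m, vs, ?_, h0, hl, hstep⟩
  by_contra hinj
  obtain ⟨i, j, hij, hne⟩ := Function.not_injective_iff.mp hinj
  wlog hlt : (i : ℕ) < (j : ℕ) generalizing i j
  · exact this j i hij.symm hne.symm (by
      rcases Nat.lt_trichotomy (i : ℕ) (j : ℕ) with h' | h' | h'
      · exact absurd h' hlt
      · exact absurd (Fin.ext h') hne
      · exact h')
  have hjm : (j : ℕ) ≤ m := Nat.lt_succ_iff.mp j.2
  set d : ℕ := (j : ℕ) - (i : ℕ) with hd
  have hd1 : 1 ≤ d := by omega
  have hm' : m - d < m := by omega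
  apply Nat.find_min hex hm'
  refine ⟨fun k => if hk : (k : ℕ) ≤ (i : ℕ) then vs ⟨k, by omega⟩
    else vs ⟨(k : ℕ) + d, by omega⟩, ?_, ?_, ?_⟩
  · dsimp only
    rw [dif_pos (by simp)]
    exact (congrArg vs (Fin.ext (by simp))).trans h0
  · dsimp only
    by_cases hk : m - d ≤ (i : ℕ)
    · rw [dif_pos (by simp only [Fin.val_last]; omega)]
      calc vs ⟨((Fin.last (m - d) : Fin (m - d + 1)) : ℕ), by omega⟩
          = vs i := congrArg vs (Fin.ext (by simp only [Fin.val_last]; omega))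
        _ = vs j := hij
        _ = b := (congrArg vs (Fin.ext (by simp only [Fin.val_last]; omega))).trans hl
    · rw [dif_neg (by simp only [Fin.val_last]; omega)]
      exact (congrArg vs (Fin.ext (by simp only [Fin.val_last]; omega))).trans hl
  · intro k
    have hk2' := k.2
    by_cases hk1 : (k : ℕ) + 1 ≤ (i : ℕ)
    · obtain ⟨e, he, hj'⟩ := hstep ⟨(k : ℕ), by omega⟩
      refine ⟨e, he, ?_⟩
      dsimp only
      rw [dif_pos (by simp only [Fin.coe_castSucc]; omega),
        dif_pos (by simp only [Fin.val_succ]; omega)]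
      have e1 : vs (⟨((k.castSucc : Fin (m - d + 1)) : ℕ), by omega⟩ : Fin (m + 1))
          = vs ((⟨(k : ℕ), by omega⟩ : Fin m).castSucc) :=
        congrArg vs (Fin.ext (by simp only [Fin.coe_castSucc]))
      have e2 : vs (⟨((k.succ : Fin (m - d + 1)) : ℕ), by omega⟩ : Fin (m + 1))
          = vs ((⟨(k : ℕ), by omega⟩ : Fin m).succ) :=
        congrArg vs (Fin.ext (by simp only [Fin.val_succ]))
      rw [e1, e2]; exact hj'
    · by_cases hk2 : (k : ℕ) ≤ (i : ℕ)
      · have hki : (k : ℕ) = (i : ℕ) := by omega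
        have hjlt : (j : ℕ) < m := by omega
        obtain ⟨e, he, hj'⟩ := hstep ⟨(j : ℕ), hjlt⟩
        refine ⟨e, he, ?_⟩
        dsimp only
        rw [dif_pos (by simp only [Fin.coe_castSucc]; omega),
          dif_neg (by simp only [Fin.val_succ]; omega)]
        have e1 : vs (⟨((k.castSucc : Fin (m - d + 1)) : ℕ), by omega⟩ : Fin (m + 1))
            = vs ((⟨(j : ℕ), hjlt⟩ : Fin m).castSucc) := by
          have h1 : (⟨((k.castSucc : Fin (m - d + 1)) : ℕ), by omega⟩ : Fin (m + 1)) = i :=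
            Fin.ext (by simp only [Fin.coe_castSucc]; omega)
          rw [h1, hij]
          exact congrArg vs (Fin.ext (by simp only [Fin.coe_castSucc]))
        have e2 : vs (⟨((k.succ : Fin (m - d + 1)) : ℕ) + d, by omega⟩ : Fin (m + 1))
            = vs ((⟨(j : ℕ), hjlt⟩ : Fin m).succ) :=
          congrArg vs (Fin.ext (by simp only [Fin.val_succ]; omega))
        rw [e1, e2]; exact hj'
      · obtain ⟨e, he, hj'⟩ := hstep ⟨(k : ℕ) + d, by omega⟩
        refine ⟨e, he, ?_⟩
        dsimp only
        rw [dif_neg (by simp only [Fin.coe_castSucc]; omega),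
          dif_neg (by simp only [Fin.val_succ]; omega)]
        have e1 : vs (⟨((k.castSucc : Fin (m - d + 1)) : ℕ) + d, by omega⟩ : Fin (m + 1))
            = vs ((⟨(k : ℕ) + d, by omega⟩ : Fin m).castSucc) :=
          congrArg vs (Fin.ext (by simp only [Fin.coe_castSucc]))
        have e2 : vs (⟨((k.succ : Fin (m - d + 1)) : ℕ) + d, by omega⟩ : Fin (m + 1))
            = vs ((⟨(k : ℕ) + d, by omega⟩ : Fin m).succ) :=
          congrArg vs (Fin.ext (by simp only [Fin.val_succ]; omega))
        rw [e1, e2]; exact hj'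

lemma suppPath_rev {G : Finset ε} {u v : V} {n : ℕ} (h : SuppPath ends G u v n) :
    SuppPath ends G v u n := by
  obtain ⟨vs, hinj, h0, hl, hstep⟩ := h
  refine ⟨vs ∘ Fin.rev, hinj.comp Fin.rev_injective, ?_, ?_, ?_⟩
  · simp only [Function.comp_apply, Fin.rev_zero, hl]
  · simp only [Function.comp_apply, Fin.rev_last, h0]
  · intro k
    obtain ⟨e, he, hj'⟩ := hstep k.rev
    refine ⟨e, he, ?_⟩
    simp only [Function.comp_apply, Fin.rev_castSucc, Fin.rev_succ]
    exact hj'.symm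

end Paths

section Cycles
variable {V ε : Type*} [DecidableEq ε] {ends : ε → V × V}

lemma mem_bundle {G : Finset ε} {z z' : V} {e : ε} :
    e ∈ Bundle ends G z z' ↔ e ∈ G ∧ Joins ends e z z' := Finset.mem_filter

lemma bundle_comm {G : Finset ε} {z z' : V} : Bundle ends G z z' = Bundle ends G z' z := by
  ext e
  rw [mem_bundle, mem_bundle]
  exact and_congr_right fun _ => joins_comm

lemma connIn_segment {G : Finset ε} {n : ℕ} {vs : Fin (n + 1) → V}
    (hstep : ∀ i : Fin n, ∃ e ∈ G, Joins ends e (vs i.castSucc) (vs i.succ)) :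
    ∀ (j : ℕ) (hj : j < n + 1) (i : ℕ) (hi : i < n + 1), i ≤ j →
      ConnIn ends G (vs ⟨i, hi⟩) (vs ⟨j, hj⟩) := by
  intro j
  induction j with
  | zero =>
    intro hj i hi hij
    have : i = 0 := by omega
    subst this
    exact ConnIn.refl _
  | succ j ihj =>
    intro hj i hi hij
    rcases Nat.lt_or_ge i (j + 1) with h | h
    · refine (ihj (by omega) i hi (by omega)).trans ?_
      obtain ⟨e, he, hstep'⟩ := hstep ⟨j, by omega⟩
      refine ConnIn.of_step he ?_
      convert hstep' using 2 <;> exact Fin.ext (by simp)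
    · have : i = j + 1 := by omega
      subst this
      exact ConnIn.refl _

lemma exists_cycle_of_path_of_edge {G : Finset ε} {m : ℕ} (hm : 2 ≤ m) {vs : Fin (m+1) → V}
    (hinj : Function.Injective vs)
    (hstep : ∀ i : Fin m, ∃ e ∈ G, Joins ends e (vs i.castSucc) (vs i.succ))
    {g : ε} (hg : g ∈ G) (hjg : Joins ends g (vs (Fin.last m)) (vs 0)) :
    ∃ n, 3 ≤ n ∧ IsCycleIn ends G n := by
  classical
  haveI : NeZero (m + 1) := ⟨by omega⟩
  haveI : Fact (1 < m + 1) := ⟨by omega⟩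
  refine ⟨m + 1, by omega, ?_⟩
  choose es hes hjs using hstep
  have hdist : ∀ (a b : Fin m), es a = es b → a = b := by
    intro a b hab
    have hjb : Joins ends (es a) (vs b.castSucc) (vs b.succ) := hab ▸ hjs b
    rcases joins_unique (hjs a) hjb with ⟨h1, _⟩ | ⟨h1, h2⟩
    · have := hinj h1
      simp only [Fin.ext_iff, Fin.coe_castSucc] at this ⊢
      exact this
    · have e1 := hinj h1
      have e2 := hinj h2
      simp only [Fin.ext_iff, Fin.coe_castSucc, Fin.val_succ] at e1 e2
      omega
  have hesg : ∀ (a : Fin m), es a ≠ g := by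
    intro a hag
    have hjg' : Joins ends (es a) (vs (Fin.last m)) (vs 0) := hag ▸ hjg
    rcases joins_unique (hjs a) hjg' with ⟨h1, _⟩ | ⟨h1, h2⟩
    · have := hinj h1
      simp only [Fin.ext_iff, Fin.coe_castSucc, Fin.val_last] at this
      have := a.2; omega
    · have e1 := hinj h1
      have e2 := hinj h2
      simp only [Fin.ext_iff, Fin.coe_castSucc, Fin.val_succ, Fin.val_last, Fin.val_zero] at e1 e2
      omega
  refine ⟨fun i => vs ⟨i.val, ZMod.val_lt i⟩,
    fun i => if h : i.val < m then es ⟨i.val, h⟩ else g, ?_, ?_, ?_⟩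
  · intro x y hxy
    have := hinj hxy
    simp only [Fin.ext_iff] at this
    exact ZMod.val_injective _ this
  · intro x y hxy
    dsimp only at hxy
    split_ifs at hxy with h1 h2 h2
    · have := hdist _ _ hxy
      simp only [Fin.ext_iff] at this
      exact ZMod.val_injective _ this
    · exact absurd hxy (hesg _)
    · exact absurd hxy.symm (hesg _)
    · have hx := ZMod.val_lt x
      have hy := ZMod.val_lt y
      exact ZMod.val_injective _ (by omega)
  · intro i
    have hval : (i + 1).val = (i.val + 1) % (m + 1) := by
      rw [ZMod.val_add, ZMod.val_one]
    dsimp only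
    by_cases h : i.val < m
    · rw [dif_pos h]
      refine ⟨hes _, ?_⟩
      have e1 : vs ⟨i.val, ZMod.val_lt i⟩ = vs ((⟨i.val, h⟩ : Fin m).castSucc) :=
        congrArg vs (Fin.ext (by simp only [Fin.coe_castSucc]))
      have e2 : vs ⟨(i + 1).val, ZMod.val_lt _⟩ = vs ((⟨i.val, h⟩ : Fin m).succ) :=
        congrArg vs (Fin.ext (by simp only [Fin.val_succ, hval]; exact Nat.mod_eq_of_lt (by omega)))
      rw [e1, e2]
      exact hjs _
    · rw [dif_neg h]
      refine ⟨hg, ?_⟩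
      have hi : i.val = m := by have := ZMod.val_lt i; omega
      have e1 : vs ⟨i.val, ZMod.val_lt i⟩ = vs (Fin.last m) :=
        congrArg vs (Fin.ext (by simp only [Fin.val_last, hi]))
      have e2 : vs ⟨(i + 1).val, ZMod.val_lt _⟩ = vs 0 :=
        congrArg vs (Fin.ext (by simp only [hval, hi, Fin.val_zero, Nat.mod_self]))
      rw [e1, e2]
      exact hjg

lemma not_connIn_sdiff_bundle (hloopless : ∀ e : ε, (ends e).1 ≠ (ends e).2)
    {G : Finset ε} (hforest : IsForestWithBundles ends G) {z z' : V}
    (hne : (Bundle ends G z z').Nonempty) :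
    ¬ ConnIn ends (G \ Bundle ends G z z') z z' := by
  obtain ⟨e₀, he₀⟩ := hne
  rw [mem_bundle] at he₀
  obtain ⟨he₀G, he₀j⟩ := he₀
  intro hconn
  obtain ⟨n, vs, hinj, h0, hl, hstep⟩ := exists_suppPath hconn
  have hzz : z ≠ z' := he₀j.ne hloopless
  have hn2 : 2 ≤ n := by
    rcases n with _ | n
    · exact absurd (h0.symm.trans (by rw [show (0 : Fin 1) = Fin.last 0 from rfl, hl])) hzz
    · rcases n with _ | n
      · exfalso
        obtain ⟨e, he, hj'⟩ := hstep 0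
        rw [Finset.mem_sdiff] at he
        refine he.2 (mem_bundle.mpr ⟨he.1, ?_⟩)
        have e1 : vs (0 : Fin 1).castSucc = z := by rw [show (0 : Fin 1).castSucc = 0 from rfl, h0]
        have e2 : vs (0 : Fin 1).succ = z' := by rw [show (0 : Fin 1).succ = Fin.last 1 from rfl, hl]
        rwa [e1, e2] at hj'
      · omega
  refine hforest (exists_cycle_of_path_of_edge hn2 hinj (fun i => ?_) he₀G ?_)
  · obtain ⟨e, he, hj'⟩ := hstep i
    exact ⟨e, (Finset.mem_sdiff.mp he).1, hj'⟩
  · rw [h0, hl]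
    exact he₀j.symm

end Cycles

section D
variable {V ε : Type*} [DecidableEq ε] {ends : ε → V × V}

lemma suppPath_connIn {G : Finset ε} {u v : V} {n : ℕ} (h : SuppPath ends G u v n) :
    ConnIn ends G u v := by
  obtain ⟨vs, _, h0, hl, hstep⟩ := h
  exact ⟨n, vs, h0, hl, hstep⟩

/-- ranged segment lemma -/
lemma connIn_segment_range {G : Finset ε} {n : ℕ} {vs : Fin (n + 1) → V} (lo : ℕ) :
    ∀ (j : ℕ) (hj : j < n + 1) (hlo : lo < n + 1), lo ≤ j →
    (∀ k : Fin n, lo ≤ (k : ℕ) → (k : ℕ) < j → ∃ e ∈ G, Joins ends e (vs k.castSucc) (vs k.succ)) →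
      ConnIn ends G (vs ⟨lo, hlo⟩) (vs ⟨j, hj⟩) := by
  intro j
  induction j with
  | zero =>
    intro hj hlo hij _
    have : lo = 0 := by omega
    subst this
    exact ConnIn.refl _
  | succ j ihj =>
    intro hj hlo hij hstep
    rcases Nat.lt_or_ge lo (j + 1) with h | h
    · refine (ihj (by omega) hlo (by omega) (fun k h1 h2 => hstep k h1 (by omega))).trans ?_
      obtain ⟨e, he, hstep'⟩ := hstep ⟨j, by omega⟩ (by simpa using by omega) (by simp)
      refine ConnIn.of_step he ?_
      convert hstep' using 2 <;> exact Fin.ext (by simp)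
    · have : lo = j + 1 := by omega
      subst this
      exact ConnIn.refl _

/-- a bundle sitting on a step of an injective path separates the endpoints -/
lemma not_connIn_sdiff_of_path_step (hloopless : ∀ e : ε, (ends e).1 ≠ (ends e).2)
    {F : Finset ε} (hforest : IsForestWithBundles ends F) {n : ℕ} {vs : Fin (n + 1) → V}
    (hinj : Function.Injective vs)
    (hstep : ∀ i : Fin n, ∃ e ∈ F, Joins ends e (vs i.castSucc) (vs i.succ))
    {i : Fin n} {z z' : V} {f : ε} (hfF : f ∈ F) (hfzz : Joins ends f z z')
    (hfstep : Joins ends f (vs i.castSucc) (vs i.succ)) :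
    ¬ ConnIn ends (F \ Bundle ends F z z') (vs 0) (vs (Fin.last n)) := by
  classical
  intro hc
  set S := Bundle ends F z z' with hS
  have hSne : S.Nonempty := ⟨f, mem_bundle.mpr ⟨hfF, hfzz⟩⟩
  have hLS := not_connIn_sdiff_bundle hloopless hforest hSne
  -- any edge of S on a step forces that step to be step i
  have hstep_ne : ∀ k : Fin n, (k : ℕ) ≠ (i : ℕ) →
      ∃ e ∈ F \ S, Joins ends e (vs k.castSucc) (vs k.succ) := by
    intro k hk
    obtain ⟨e, he, hj⟩ := hstep k
    refine ⟨e, Finset.mem_sdiff.mpr ⟨he, fun heS => ?_⟩, hj⟩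
    have hezz : Joins ends e z z' := (mem_bundle.mp heS).2
    -- pair {vs k.castSucc, vs k.succ} = {z, z'} = {vs i.castSucc, vs i.succ}
    rcases joins_unique hj hezz with ⟨h1, h2⟩ | ⟨h1, h2⟩ <;>
    rcases joins_unique hfstep hfzz with ⟨h3, h4⟩ | ⟨h3, h4⟩
    · -- vs k.castSucc = z = vs i.castSucc etc
      have := hinj (h1.trans h3.symm)
      simp only [Fin.ext_iff, Fin.coe_castSucc] at this
      exact hk this
    · have e1 := hinj (h1.trans h4.symm)
      have e2 := hinj (h2.trans h3.symm)
      simp only [Fin.ext_iff, Fin.coe_castSucc, Fin.val_succ] at e1 e2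
      omega
    · have e1 := hinj (h1.trans h4.symm)
      have e2 := hinj (h2.trans h3.symm)
      simp only [Fin.ext_iff, Fin.coe_castSucc, Fin.val_succ] at e1 e2
      omega
    · have := hinj (h1.trans h3.symm)
      simp only [Fin.ext_iff, Fin.coe_castSucc] at this
      exact hk this
  have hpre : ConnIn ends (F \ S) (vs 0) (vs i.castSucc) := by
    have := connIn_segment_range (G := F \ S) (vs := vs) 0 (i : ℕ) (by omega) (by omega)
      (by omega) (fun k _ h2 => hstep_ne k (by omega))
    convert this using 2 <;> exact Fin.ext (by simp)
  have hsuf : ConnIn ends (F \ S) (vs i.succ) (vs (Fin.last n)) := by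
    have := connIn_segment_range (G := F \ S) (vs := vs) ((i : ℕ) + 1) n (by omega)
      (by have := i.2; omega) (by have := i.2; omega)
      (fun k h1 _ => hstep_ne k (by omega))
    convert this using 2 <;> exact Fin.ext (by simp)
  have hii : ConnIn ends (F \ S) (vs i.castSucc) (vs i.succ) :=
    (hpre.symm.trans hc).trans hsuf.symm
  rcases joins_unique hfstep hfzz with ⟨h1, h2⟩ | ⟨h1, h2⟩
  · rw [h1, h2] at hii
    exact hLS hii
  · rw [h1, h2] at hii
    exact hLS hii.symm

/-- a path of length ≥ 2 between `u,v` forbids any direct `F`-edge between them -/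
lemma bundle_empty_of_long_path (hloopless : ∀ e : ε, (ends e).1 ≠ (ends e).2)
    {F : Finset ε} (hforest : IsForestWithBundles ends F) {u v : V} {m : ℕ} (hm : 2 ≤ m)
    (hp : SuppPath ends F u v m) : Bundle ends F u v = ∅ := by
  classical
  obtain ⟨vs, hinj, h0, hl, hstep⟩ := hp
  rw [Finset.eq_empty_iff_forall_notMem]
  intro f hf
  rw [mem_bundle] at hf
  refine hforest (exists_cycle_of_path_of_edge hm hinj hstep hf.1 ?_)
  rw [h0, hl]
  exact hf.2.symm

lemma cnt_union_biUnion [DecidableEq ε] {𝒯 : Finset (Finset ε)}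
    (h : ∀ S ∈ 𝒯, ∃ z z' e₀, e₀ ∈ S ∧ ∀ f ∈ S, Joins ends f z z') (G : Finset ε)
    (Z : Finset V) : cnt ends G Z ≤ cnt ends (G ∪ 𝒯.biUnion id) Z + 𝒯.card := by
  classical
  induction 𝒯 using Finset.induction_on with
  | empty => simp
  | @insert S 𝒯' hS ih =>
    have h1 := ih (fun T hT => h T (Finset.mem_insert_of_mem hT))
    obtain ⟨z, z', e₀, he₀, hall⟩ := h S (Finset.mem_insert_self _ _)
    have h2 := cnt_le_cnt_union_parallel_add_one (G := G ∪ 𝒯'.biUnion id) he₀ hall (Z := Z)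
    have hset : (G ∪ 𝒯'.biUnion id) ∪ S = G ∪ (insert S 𝒯').biUnion id := by
      ext x
      simp only [Finset.mem_union, Finset.mem_biUnion, Finset.mem_insert, id]
      constructor
      · rintro ((h | ⟨T, hT, hx⟩) | h)
        · exact Or.inl h
        · exact Or.inr ⟨T, Or.inr hT, hx⟩
        · exact Or.inr ⟨S, Or.inl rfl, h⟩
      · rintro (h | ⟨T, (rfl | hT), hx⟩)
        · exact Or.inl (Or.inl h)
        · exact Or.inr hx
        · exact Or.inl (Or.inr ⟨T, hT, hx⟩)
    rw [hset] at h2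
    rw [Finset.card_insert_of_notMem hS]
    omega

lemma joins_iff_sym2 {e : ε} {u v : V} :
    Joins ends e u v ↔ Quot.mk (Sym2.Rel _) (ends e) = s(u, v) := by
  constructor
  · rintro (h | h) <;> rw [h]
    exact Sym2.eq_swap
  · intro h
    rcases hends : ends e with ⟨a, b⟩
    rw [hends] at h
    rcases Sym2.eq_iff.mp h with ⟨rfl, rfl⟩ | ⟨rfl, rfl⟩
    · exact Or.inl hends
    · exact Or.inr hends

lemma bundle_eq_of_mem {G : Finset ε} {z z' w w' : V} {e : ε}
    (h1 : e ∈ Bundle ends G z z') (h2 : e ∈ Bundle ends G w w') :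
    Bundle ends G z z' = Bundle ends G w w' := by
  rw [mem_bundle] at h1 h2
  rcases joins_unique h1.2 h2.2 with ⟨rfl, rfl⟩ | ⟨rfl, rfl⟩
  · rfl
  · exact bundle_comm

end D

section E
variable {V ε C : Type*} [DecidableEq ε] {ends : ε → V × V} {c : ε → C}

lemma exists_long_path_of_nonaddable
    {F : Finset ε} (hF : PCFB ends c F) {e : ε} (he : e ∉ F)
    (hnc : ∀ f ∈ F, c f = c e → ¬ ∃ w, Inc ends f w ∧ Inc ends e w)
    (hnp : ¬ PCFB ends c (insert e F)) {u v : V} (hj : Joins ends e u v) :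
    ∃ m, 2 ≤ m ∧ SuppPath ends F u v m := by
  classical
  have hPC : ProperlyColored ends c (insert e F) := by
    intro a ha b hb hab hsh
    rcases Finset.mem_insert.mp ha with rfl | haF
    · rcases Finset.mem_insert.mp hb with rfl | hbF
      · exact absurd rfl hab
      · intro hcab
        exact hnc b hbF hcab.symm (by obtain ⟨w, h1, h2⟩ := hsh; exact ⟨w, h2, h1⟩)
    · rcases Finset.mem_insert.mp hb with rfl | hbF
      · intro hcab
        exact hnc a haF hcab (by obtain ⟨w, h1, h2⟩ := hsh; exact ⟨w, h1, h2⟩)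
      · exact hF.2 a haF b hbF hab hsh
  have hcyc : ∃ n, 3 ≤ n ∧ IsCycleIn ends (insert e F) n := by
    by_contra hforest
    exact hnp ⟨hforest, hPC⟩
  obtain ⟨n, hn3, vs, es, hvinj, heinj, hprop⟩ := hcyc
  haveI : NeZero n := ⟨by omega⟩
  have hi₀ : ∃ i₀, es i₀ = e := by
    by_contra hno
    push_neg at hno
    refine hF.1 ⟨n, hn3, vs, es, hvinj, heinj, fun i => ⟨?_, (hprop i).2⟩⟩
    rcases Finset.mem_insert.mp (hprop i).1 with h | h
    · exact absurd h (hno i)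
    · exact h
  obtain ⟨i₀, hi₀⟩ := hi₀
  set m := n - 1 with hm
  have hm2 : 2 ≤ m := by omega
  have hstepF : ∀ x : ZMod n, x ≠ i₀ → es x ∈ F := by
    intro x hx
    rcases Finset.mem_insert.mp (hprop x).1 with h | h
    · exact absurd (heinj (h.trans hi₀.symm)) hx
    · exact h
  have hne_idx : ∀ k : ℕ, k < m → i₀ + 1 + (k : ZMod n) ≠ i₀ := by
    intro k hk h2
    have h3 : i₀ + (1 + (k : ZMod n)) = i₀ + 0 := by
      rw [add_zero, ← add_assoc]; exact h2
    have h4 : (1 + (k : ZMod n)) = 0 := add_left_cancel h3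
    have h5 : (((1 + k : ℕ)) : ZMod n) = 0 := by push_cast; exact h4
    have h6 := congrArg ZMod.val h5
    rw [ZMod.val_natCast_of_lt (by omega), ZMod.val_zero] at h6
    omega
  set ws : Fin (m + 1) → V := fun k => vs (i₀ + 1 + ((k : ℕ) : ZMod n)) with hws
  have hwinj : Function.Injective ws := by
    intro a b hab
    have h1 := hvinj hab
    have h2 : ((a : ℕ) : ZMod n) = ((b : ℕ) : ZMod n) := add_left_cancel h1
    have h3 := congrArg ZMod.val h2
    rw [ZMod.val_natCast_of_lt (by omega), ZMod.val_natCast_of_lt (by omega)] at h3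
    exact Fin.ext h3
  have hsteps : ∀ k : Fin m, ∃ f ∈ F, Joins ends f (ws k.castSucc) (ws k.succ) := by
    intro k
    refine ⟨es (i₀ + 1 + ((k : ℕ) : ZMod n)), hstepF _ (hne_idx _ k.2), ?_⟩
    have hpk := (hprop (i₀ + 1 + ((k : ℕ) : ZMod n))).2
    have e1 : ws k.castSucc = vs (i₀ + 1 + ((k : ℕ) : ZMod n)) := by
      rw [hws]
      exact congrArg vs (by rw [Fin.coe_castSucc])
    have e2 : ws k.succ = vs (i₀ + 1 + ((k : ℕ) : ZMod n) + 1) := by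
      rw [hws]
      refine congrArg vs ?_
      rw [Fin.val_succ]
      push_cast
      ring
    rw [e1, e2]
    exact hpk
  have h0eq : ws 0 = vs (i₀ + 1) := by
    rw [hws]
    exact congrArg vs (by rw [Fin.val_zero]; push_cast; ring)
  have hleq : ws (Fin.last m) = vs i₀ := by
    rw [hws]
    refine congrArg vs ?_
    rw [Fin.val_last]
    have : ((m : ℕ) : ZMod n) = (n : ZMod n) - 1 := by
      have : (m : ℕ) = n - 1 := hm
      rw [this]
      push_cast [Nat.cast_sub (by omega : 1 ≤ n)]
      ring
    rw [this, ZMod.natCast_self]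
    ring
  have hje : Joins ends e (vs i₀) (vs (i₀ + 1)) := hi₀ ▸ (hprop i₀).2
  rcases joins_unique hj hje with ⟨hu, hv⟩ | ⟨hu, hv⟩
  · -- u = vs i₀, v = vs (i₀+1) : ws is a path from v to u
    refine ⟨m, hm2, suppPath_rev ⟨ws, hwinj, ?_, ?_, hsteps⟩⟩
    · rw [h0eq, hv]
    · rw [hleq, hu]
  · -- u = vs (i₀+1), v = vs i₀ : ws is a path from u to v
    refine ⟨m, hm2, ⟨ws, hwinj, ?_, ?_, hsteps⟩⟩
    · rw [h0eq, hu]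
    · rw [hleq, hv]

end E

section F
variable {V ε : Type*} [DecidableEq ε] {ends : ε → V × V}

lemma hall_condition_count {ι : Type*} [DecidableEq ι] {G₀ : Finset ε}
    {N : ι → Finset (Finset ε)} {uu vv : ι → V} {pick : ι → ε}
    (hpar : ∀ q : ι, ∀ S ∈ N q, ∃ z z' e₀, e₀ ∈ S ∧ ∀ f ∈ S, Joins ends f z z')
    (hjoin : ∀ q : ι, Joins ends (pick q) (uu q) (vv q))
    (hnc : ∀ (s'' : Finset ι) (q : ι), q ∉ s'' →
      ¬ ConnIn ends (G₀ ∪ s''.image pick) (uu q) (vv q))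
    (hcover : ∀ q : ι, ConnIn ends (G₀ ∪ (N q).biUnion id) (uu q) (vv q))
    (s : Finset ι) : s.card ≤ (s.biUnion N).card := by
  classical
  set Z : Finset V := s.image uu ∪ s.image vv with hZ
  set 𝒯 : Finset (Finset ε) := s.biUnion N with h𝒯
  set Ts : Finset ε := 𝒯.biUnion id with hTs
  -- Claim 1
  have claim1 : ∀ s' : Finset ι, s' ⊆ s →
      cnt ends (G₀ ∪ s'.image pick) Z + s'.card ≤ cnt ends G₀ Z := by
    intro s' hs'
    induction s' using Finset.induction_on with
    | empty => simp [Finset.union_empty]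
    | @insert q s'' hq ih =>
      have hsub : s'' ⊆ s := fun x hx => hs' (Finset.mem_insert_of_mem hx)
      have hqs : q ∈ s := hs' (Finset.mem_insert_self _ _)
      have h1 := ih hsub
      have hu : uu q ∈ Z := Finset.mem_union_left _ (Finset.mem_image_of_mem _ hqs)
      have hv : vv q ∈ Z := Finset.mem_union_right _ (Finset.mem_image_of_mem _ hqs)
      have h2 := cnt_insert_add_one_le (hjoin q) (hnc s'' q hq) hu hv
      have hset : (G₀ ∪ s''.image pick) ∪ {pick q} = G₀ ∪ (insert q s'').image pick := by
        ext x
        simp only [Finset.mem_union, Finset.mem_image, Finset.mem_insert,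
          Finset.mem_singleton]
        constructor
        · rintro ((h | ⟨r, hr, rfl⟩) | rfl)
          · exact Or.inl h
          · exact Or.inr ⟨r, Or.inr hr, rfl⟩
          · exact Or.inr ⟨q, Or.inl rfl, rfl⟩
        · rintro (h | ⟨r, (rfl | hr), rfl⟩)
          · exact Or.inl (Or.inl h)
          · exact Or.inr rfl
          · exact Or.inl (Or.inr ⟨r, hr, rfl⟩)
      rw [hset] at h2
      rw [Finset.card_insert_of_notMem hq]
      omega
  -- Claim 2
  have claim2 : cnt ends G₀ Z ≤ cnt ends (G₀ ∪ Ts) Z + 𝒯.card := by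
    apply cnt_union_biUnion
    intro S hS
    obtain ⟨q, hq, hSq⟩ := Finset.mem_biUnion.mp hS
    exact hpar q S hSq
  -- Claim 4
  have claim4 : ∀ s' : Finset ι, s' ⊆ s →
      cnt ends ((G₀ ∪ Ts) ∪ s'.image pick) Z = cnt ends (G₀ ∪ Ts) Z := by
    intro s' hs'
    induction s' using Finset.induction_on with
    | empty => rw [Finset.image_empty, Finset.union_empty]
    | @insert q s'' hq ih =>
      have hsub : s'' ⊆ s := fun x hx => hs' (Finset.mem_insert_of_mem hx)
      have hqs : q ∈ s := hs' (Finset.mem_insert_self _ _)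
      have hNq : (N q).biUnion id ⊆ Ts := by
        intro x hx
        obtain ⟨S, hS, hxS⟩ := Finset.mem_biUnion.mp hx
        exact Finset.mem_biUnion.mpr ⟨S, Finset.mem_biUnion.mpr ⟨q, hqs, hS⟩, hxS⟩
      have hconn : ConnIn ends ((G₀ ∪ Ts) ∪ s''.image pick) (uu q) (vv q) := by
        refine (hcover q).mono ?_
        intro x hx
        rcases Finset.mem_union.mp hx with h | h
        · exact Finset.mem_union_left _ (Finset.mem_union_left _ h)
        · exact Finset.mem_union_left _ (Finset.mem_union_right _ (hNq h))
      have hrel : ∀ x y, ConnIn ends (((G₀ ∪ Ts) ∪ s''.image pick) ∪ {pick q}) x y ↔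
          ConnIn ends ((G₀ ∪ Ts) ∪ s''.image pick) x y := by
        intro x y
        exact connIn_union_parallel_of_conn (Finset.mem_singleton_self (pick q))
          (fun f hf => by rw [Finset.mem_singleton] at hf; subst hf; exact hjoin q) hconn
      have hset : ((G₀ ∪ Ts) ∪ s''.image pick) ∪ {pick q} =
          (G₀ ∪ Ts) ∪ (insert q s'').image pick := by
        ext x
        simp only [Finset.mem_union, Finset.mem_image, Finset.mem_insert,
          Finset.mem_singleton]
        constructor
        · rintro ((h | ⟨r, hr, rfl⟩) | rfl)
          · exact Or.inl h
          · exact Or.inr ⟨r, Or.inr hr, rfl⟩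
          · exact Or.inr ⟨q, Or.inl rfl, rfl⟩
        · rintro (h | ⟨r, (rfl | hr), rfl⟩)
          · exact Or.inl (Or.inl h)
          · exact Or.inr rfl
          · exact Or.inl (Or.inr ⟨r, hr, rfl⟩)
      rw [← hset, cnt_congr hrel, ih hsub]
  -- Claim 3 : monotonicity
  have claim3 : cnt ends ((G₀ ∪ Ts) ∪ s.image pick) Z ≤ cnt ends (G₀ ∪ s.image pick) Z := by
    apply cnt_mono
    intro x y hxy
    refine hxy.mono ?_
    intro a ha
    rcases Finset.mem_union.mp ha with h | h
    · exact Finset.mem_union_left _ (Finset.mem_union_left _ h)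
    · exact Finset.mem_union_right _ h
  have c1 := claim1 s Finset.Subset.rfl
  have c4 := claim4 s Finset.Subset.rfl
  omega
end F

end AuxiliaryLemmas

/-- The `1/3`-approximation guarantee of the bundles local search: if `F` is a properly
colored forest with bundles satisfying the two local-optimality conditions of the
algorithm — (i) no single edge can be added, and (ii) no bundle on a `u`–`v` path of
`supp F` can be profitably exchanged for a larger bundle between `u` and `v` — then for
every properly colored forest with bundles `O` we have `|O \ F| ≤ 3 |F \ O|`, and
consequently `|O| ≤ 3 |F|`. -/
theorem bundles_local_search_approx {V ε C : Type*} [Fintype ε] [DecidableEq ε]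
    (ends : ε → V × V) (hloopless : ∀ e : ε, (ends e).1 ≠ (ends e).2)
    (c : ε → C) (F : Finset ε) (hF : PCFB ends c F)
    (hmax : ∀ e ∉ F, ¬ PCFB ends c (insert e F))
    (hexch : ∀ u v z z' : V,
      ConnIn ends F u v →
      (Bundle ends F z z').Nonempty →
      ¬ ConnIn ends (F \ Bundle ends F z z') u v →
      (Finset.univ.filter (fun e : ε => e ∉ F ∧ Joins ends e u v ∧
          ∀ f ∈ F \ Bundle ends F z z', (Inc ends f u ∨ Inc ends f v) → c f ≠ c e)).card
        ≤ (Bundle ends F z z').card)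
    (O : Finset ε) (hO : PCFB ends c O) :
    (O \ F).card ≤ 3 * (F \ O).card ∧ O.card ≤ 3 * F.card := by
  classical
  obtain ⟨hFf, hFc⟩ := hF
  obtain ⟨hOf, hOc⟩ := hO
  set B : Finset ε := F \ O with hB
  set conflict : ε → Prop :=
    fun e => ∃ f ∈ F, c f = c e ∧ ∃ w, Inc ends f w ∧ Inc ends e w with hconflict
  set A1 : Finset ε := (O \ F).filter conflict with hA1
  set A2 : Finset ε := (O \ F).filter (fun e => ¬ conflict e) with hA2
  -- ## bound for A1
  have hA1bound : A1.card ≤ 2 * B.card := by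
    set D : ε → Finset ε := fun f => O.filter
      (fun e => c e = c f ∧ (Inc ends e (ends f).1 ∨ Inc ends e (ends f).2)) with hD
    have hsub : A1 ⊆ B.biUnion D := by
      intro e he
      rw [hA1, Finset.mem_filter, Finset.mem_sdiff] at he
      obtain ⟨⟨heO, heF⟩, f, hfF, hcf, w, hIf, hIe⟩ := he
      have hfB : f ∈ B := by
        rw [hB, Finset.mem_sdiff]
        refine ⟨hfF, fun hfO => ?_⟩
        exact hOc e heO f hfO (fun h => heF (h ▸ hfF)) ⟨w, hIe, hIf⟩ hcf.symm
      refine Finset.mem_biUnion.mpr ⟨f, hfB, ?_⟩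
      rw [hD]
      refine Finset.mem_filter.mpr ⟨heO, hcf.symm, ?_⟩
      rcases hIf with h | h
      · exact Or.inl (h ▸ hIe)
      · exact Or.inr (h ▸ hIe)
    have hDcard : ∀ f ∈ B, (D f).card ≤ 2 := by
      intro f _
      have h1 : D f ⊆ O.filter (fun e => c e = c f ∧ Inc ends e (ends f).1) ∪
          O.filter (fun e => c e = c f ∧ Inc ends e (ends f).2) := by
        intro e he
        rw [hD, Finset.mem_filter] at he
        obtain ⟨heO, hc, h | h⟩ := he
        · exact Finset.mem_union_left _ (Finset.mem_filter.mpr ⟨heO, hc, h⟩)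
        · exact Finset.mem_union_right _ (Finset.mem_filter.mpr ⟨heO, hc, h⟩)
      have h2 : ∀ (w : V), (O.filter (fun e => c e = c f ∧ Inc ends e w)).card ≤ 1 := by
        intro w
        rw [Finset.card_le_one]
        intro a ha b hb
        rw [Finset.mem_filter] at ha hb
        by_contra hab
        exact hOc a ha.1 b hb.1 hab ⟨w, ha.2.2, hb.2.2⟩ (ha.2.1.trans hb.2.1.symm)
      calc (D f).card ≤ _ := Finset.card_le_card h1
        _ ≤ _ := Finset.card_union_le _ _
        _ ≤ 2 := by have := h2 (ends f).1; have := h2 (ends f).2; omega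
    calc A1.card ≤ (B.biUnion D).card := Finset.card_le_card hsub
      _ ≤ ∑ f ∈ B, (D f).card := Finset.card_biUnion_le
      _ ≤ ∑ _f ∈ B, 2 := Finset.sum_le_sum hDcard
      _ = 2 * B.card := by rw [Finset.sum_const, smul_eq_mul, mul_comm]
  -- ## A2 setup
  have hA2mem : ∀ e ∈ A2, e ∈ O ∧ e ∉ F ∧ ¬ conflict e := by
    intro e he
    rw [hA2, Finset.mem_filter, Finset.mem_sdiff] at he
    exact ⟨he.1.1, he.1.2, he.2⟩
  have hA2path : ∀ e ∈ A2, ∀ u v : V, Joins ends e u v →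
      ∃ m, 2 ≤ m ∧ SuppPath ends F u v m := by
    intro e he u v hj
    obtain ⟨heO, heF, hncon⟩ := hA2mem e he
    refine exists_long_path_of_nonaddable ⟨hFf, hFc⟩ heF ?_ (hmax e heF) hj
    intro f hf hcf hsh
    exact hncon ⟨f, hf, hcf, hsh⟩
  set P : Finset (Sym2 V) := A2.image (fun e => Quot.mk (Sym2.Rel _) (ends e)) with hP
  set pureE : Finset ε := F.filter
    (fun f => Bundle ends F (ends f).1 (ends f).2 ⊆ B) with hpureE
  set PB : Finset (Finset ε) := pureE.image
    (fun f => Bundle ends F (ends f).1 (ends f).2) with hPB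
  set G₀ : Finset ε := F \ pureE with hG₀
  set N : Sym2 V → Finset (Finset ε) :=
    fun p => PB.filter (fun S => ¬ ConnIn ends (F \ S) p.out.1 p.out.2) with hN
  have hout : ∀ p : Sym2 V, Quot.mk (Sym2.Rel _) (p.out.1, p.out.2) = p := by
    intro p
    rw [Prod.mk.eta]
    exact p.out_eq
  have hjoins_of_mk : ∀ (e : ε) (p : Sym2 V), Quot.mk (Sym2.Rel _) (ends e) = p →
      Joins ends e p.out.1 p.out.2 := by
    intro e p hmk
    refine joins_iff_sym2.mpr ?_
    rw [hmk]
    exact (hout p).symm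
  set uu : {p : Sym2 V // p ∈ P} → V := fun q => q.1.out.1 with huu
  set vv : {p : Sym2 V // p ∈ P} → V := fun q => q.1.out.2 with hvv
  have hpickex : ∀ q : {p : Sym2 V // p ∈ P}, ∃ e, e ∈ A2 ∧ Quot.mk (Sym2.Rel _) (ends e) = q.1 := by
    intro q
    obtain ⟨e, he, heq⟩ := Finset.mem_image.mp q.2
    exact ⟨e, he, heq⟩
  choose pick hpickA2 hpickmk using hpickex
  have hjoin : ∀ q, Joins ends (pick q) (uu q) (vv q) :=
    fun q => hjoins_of_mk _ _ (hpickmk q)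
  have hlongpath : ∀ q, ∃ m, 2 ≤ m ∧ SuppPath ends F (uu q) (vv q) m :=
    fun q => hA2path (pick q) (hpickA2 q) _ _ (hjoin q)
  have hbempty : ∀ q, Bundle ends F (uu q) (vv q) = ∅ := by
    intro q
    obtain ⟨m, hm, hpath⟩ := hlongpath q
    exact bundle_empty_of_long_path hloopless hFf hm hpath
  have hconnF : ∀ q, ConnIn ends F (uu q) (vv q) := by
    intro q
    obtain ⟨m, _, hpath⟩ := hlongpath q
    exact suppPath_connIn hpath
  -- step map into O
  have hstepmapO : ∀ q, ∀ a b : V, Step ends G₀ a b →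
      Step ends (O \ Bundle ends O (uu q) (vv q)) a b := by
    intro q a b ⟨f, hfG₀, hjf⟩
    rw [hG₀, Finset.mem_sdiff] at hfG₀
    obtain ⟨hfF, hfnp⟩ := hfG₀
    rw [hpureE, Finset.mem_filter] at hfnp
    have : ¬ Bundle ends F (ends f).1 (ends f).2 ⊆ B := fun h => hfnp ⟨hfF, h⟩
    obtain ⟨g, hgB, hgnB⟩ := Finset.not_subset.mp this
    rw [mem_bundle] at hgB
    have hgO : g ∈ O := by
      rw [hB, Finset.mem_sdiff] at hgnB
      by_contra h
      exact hgnB ⟨hgB.1, h⟩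
    have hgab : Joins ends g a b :=
      Joins.congr_pair hgB.2 (Or.inl rfl) hjf
    refine ⟨g, Finset.mem_sdiff.mpr ⟨hgO, fun hgbun => ?_⟩, hgab⟩
    have : g ∈ Bundle ends F (uu q) (vv q) :=
      mem_bundle.mpr ⟨hgB.1, (mem_bundle.mp hgbun).2⟩
    rw [hbempty q] at this
    exact absurd this (Finset.notMem_empty g)
  -- the non-connectivity hypothesis for the Hall condition
  have hnc : ∀ (s'' : Finset {p : Sym2 V // p ∈ P}) (q : {p : Sym2 V // p ∈ P}), q ∉ s'' →
      ¬ ConnIn ends (G₀ ∪ s''.image pick) (uu q) (vv q) := by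
    intro s'' q hq hcontra
    have hmap : ∀ a b : V, Step ends (G₀ ∪ s''.image pick) a b →
        Step ends (O \ Bundle ends O (uu q) (vv q)) a b := by
      intro a b ⟨f, hf, hjf⟩
      rcases Finset.mem_union.mp hf with h | h
      · exact hstepmapO q a b ⟨f, h, hjf⟩
      · obtain ⟨r, hr, rfl⟩ := Finset.mem_image.mp h
        have hrO : pick r ∈ O := (hA2mem _ (hpickA2 r)).1
        refine ⟨pick r, Finset.mem_sdiff.mpr ⟨hrO, fun hbun => ?_⟩, hjf⟩
        have hjr : Joins ends (pick r) (uu q) (vv q) := (mem_bundle.mp hbun).2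
        have : Quot.mk (Sym2.Rel _) (ends (pick r)) = q.1 := by
          rw [joins_iff_sym2] at hjr
          rw [hjr]
          exact hout q.1
        have : r = q := Subtype.ext ((hpickmk r).symm.trans this)
        exact hq (this ▸ hr)
    have hOconn : ConnIn ends (O \ Bundle ends O (uu q) (vv q)) (uu q) (vv q) :=
      hcontra.map hmap
    have hbne : (Bundle ends O (uu q) (vv q)).Nonempty :=
      ⟨pick q, mem_bundle.mpr ⟨(hA2mem _ (hpickA2 q)).1, hjoin q⟩⟩
    exact not_connIn_sdiff_bundle hloopless hOf hbne hOconn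
  -- covering hypothesis
  have hcover : ∀ q, ConnIn ends (G₀ ∪ (N q.1).biUnion id) (uu q) (vv q) := by
    intro q
    obtain ⟨m, hm, vs, hinj, h0, hl, hstep⟩ := hlongpath q
    refine ⟨m, vs, h0, hl, ?_⟩
    intro i
    obtain ⟨f, hfF, hjf⟩ := hstep i
    by_cases hf : f ∈ pureE
    · refine ⟨f, Finset.mem_union_right _ ?_, hjf⟩
      have hfS : f ∈ Bundle ends F (ends f).1 (ends f).2 :=
        mem_bundle.mpr ⟨hfF, Or.inl rfl⟩
      have hSN : Bundle ends F (ends f).1 (ends f).2 ∈ N q.1 := by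
        rw [hN]
        refine Finset.mem_filter.mpr ⟨Finset.mem_image_of_mem _ hf, ?_⟩
        have := not_connIn_sdiff_of_path_step hloopless hFf hinj hstep
          (i := i) hfF (Or.inl rfl) hjf
        rw [h0, hl] at this
        exact this
      exact Finset.mem_biUnion.mpr ⟨_, hSN, hfS⟩
    · exact ⟨f, Finset.mem_union_left _ (Finset.mem_sdiff.mpr ⟨hfF, hf⟩), hjf⟩
  -- parallel classes
  have hpar : ∀ q : {p : Sym2 V // p ∈ P}, ∀ S ∈ N q.1,
      ∃ z z' e₀, e₀ ∈ S ∧ ∀ f ∈ S, Joins ends f z z' := by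
    intro q S hS
    rw [hN] at hS
    obtain ⟨f₀, hf₀, rfl⟩ := Finset.mem_image.mp (Finset.mem_filter.mp hS).1
    rw [hpureE, Finset.mem_filter] at hf₀
    exact ⟨(ends f₀).1, (ends f₀).2, f₀, mem_bundle.mpr ⟨hf₀.1, Or.inl rfl⟩,
      fun f hf => (mem_bundle.mp hf).2⟩
  -- Hall's theorem
  have hhall := hall_condition_count (ends := ends) hpar hjoin hnc hcover
  obtain ⟨φ, hφinj, hφmem⟩ :=
    (Finset.all_card_le_biUnion_card_iff_exists_injective
      (fun q : {p : Sym2 V // p ∈ P} => N q.1)).mp hhall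
  -- each φ q is a bundle in PB
  have hφPB : ∀ q, ∃ f₀ ∈ pureE, φ q = Bundle ends F (ends f₀).1 (ends f₀).2 := by
    intro q
    have := (Finset.mem_filter.mp (hφmem q)).1
    obtain ⟨f₀, hf₀, heq⟩ := Finset.mem_image.mp this
    exact ⟨f₀, hf₀, heq.symm⟩
  -- A2 bound
  have hA2bound : A2.card ≤ B.card := by
    have hfib : A2.card = ∑ p ∈ P, (A2.filter (fun e => Quot.mk (Sym2.Rel _) (ends e) = p)).card :=
      Finset.card_eq_sum_card_fiberwise (fun e he => Finset.mem_image_of_mem _ he)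
    have hattach : ∑ p ∈ P, (A2.filter (fun e => Quot.mk (Sym2.Rel _) (ends e) = p)).card =
        ∑ q ∈ P.attach, (A2.filter (fun e => Quot.mk (Sym2.Rel _) (ends e) = q.1)).card :=
      (Finset.sum_attach P _).symm
    have hper : ∀ q ∈ P.attach,
        (A2.filter (fun e => Quot.mk (Sym2.Rel _) (ends e) = q.1)).card ≤ (φ q).card := by
      intro q _
      obtain ⟨f₀, hf₀, hφq⟩ := hφPB q
      have hNq := Finset.mem_filter.mp (hφmem q)
      have hnotconn : ¬ ConnIn ends (F \ Bundle ends F (ends f₀).1 (ends f₀).2)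
          (uu q) (vv q) := by
        have := hNq.2
        rw [hφq] at this
        exact this
      have hbne : (Bundle ends F (ends f₀).1 (ends f₀).2).Nonempty := by
        rw [hpureE, Finset.mem_filter] at hf₀
        exact ⟨f₀, mem_bundle.mpr ⟨hf₀.1, Or.inl rfl⟩⟩
      have hex := hexch (uu q) (vv q) (ends f₀).1 (ends f₀).2 (hconnF q) hbne hnotconn
      rw [← hφq] at hex
      refine le_trans (Finset.card_le_card ?_) hex
      intro e he
      rw [Finset.mem_filter] at he
      obtain ⟨heA2, hemk⟩ := he
      obtain ⟨heO, heF, hncon⟩ := hA2mem e heA2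
      have hjuv : Joins ends e (uu q) (vv q) := hjoins_of_mk _ _ hemk
      refine Finset.mem_filter.mpr ⟨Finset.mem_univ e, heF, hjuv, ?_⟩
      intro f hf hincf
      rw [Finset.mem_sdiff] at hf
      intro hcfe
      rcases hincf with h | h
      · exact hncon ⟨f, hf.1, hcfe, uu q, h, hjuv.inc_left⟩
      · exact hncon ⟨f, hf.1, hcfe, vv q, h, hjuv.inc_right⟩
    have hdisj : ∀ x ∈ P.attach, ∀ y ∈ P.attach, x ≠ y → Disjoint (φ x) (φ y) := by
      intro x _ y _ hxy
      by_contra hnd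
      obtain ⟨el, hel⟩ := Finset.not_disjoint_iff_nonempty_inter.mp hnd
      rw [Finset.mem_inter] at hel
      obtain ⟨f₁, _, hφx⟩ := hφPB x
      obtain ⟨f₂, _, hφy⟩ := hφPB y
      have h1 := hel.1; have h2 := hel.2
      rw [hφx] at h1
      rw [hφy] at h2
      have : φ x = φ y := by
        rw [hφx, hφy]
        exact bundle_eq_of_mem h1 h2
      exact hxy (hφinj this)
    have hbiu : ∑ q ∈ P.attach, (φ q).card = (P.attach.biUnion φ).card :=
      (Finset.card_biUnion hdisj).symm
    have hsubB : P.attach.biUnion φ ⊆ B := by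
      intro x hx
      obtain ⟨q, _, hxq⟩ := Finset.mem_biUnion.mp hx
      obtain ⟨f₀, hf₀, hφq⟩ := hφPB q
      rw [hpureE, Finset.mem_filter] at hf₀
      exact hf₀.2 (hφq ▸ hxq)
    calc A2.card = ∑ q ∈ P.attach, (A2.filter (fun e => Quot.mk (Sym2.Rel _) (ends e) = q.1)).card :=
          hfib.trans hattach
      _ ≤ ∑ q ∈ P.attach, (φ q).card := Finset.sum_le_sum hper
      _ = (P.attach.biUnion φ).card := hbiu
      _ ≤ B.card := Finset.card_le_card hsubB
  -- ## assembly
  have hsplit : A1.card + A2.card = (O \ F).card :=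
    Finset.card_filter_add_card_filter_not (p := conflict)
  have hpart1 : (O \ F).card ≤ 3 * (F \ O).card := by
    have hBc : B.card = (F \ O).card := by rw [hB]
    omega
  refine ⟨hpart1, ?_⟩
  have e1 : (O ∩ F).card + (O \ F).card = O.card := Finset.card_inter_add_card_sdiff O F
  have e2 : (F ∩ O).card + (F \ O).card = F.card := Finset.card_inter_add_card_sdiff F O
  have e3 : (O ∩ F).card = (F ∩ O).card := by rw [Finset.inter_comm]
  omega
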